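/- Representation formula (vector-valued): let X be a two-sided quaternionic Banach space, Ω ⊆ ℍ an axially symmetric slice domain, and f : Ω → X slice hyperholomorphic. Then for every point x + Iy ∈ Ω (with x, y ∈ ℝ, I ∈ 𝕊) and every J ∈ 𝕊 one has f(x + Iy) = (1/2)(1 − IJ) f(x + Jy) + (1/2)(1 + IJ) f(x − Jy), where the quaternions (1 ± IJ)/2 act on X by the left module structure. -/

import Mathlib

local notation "ℍ" => Quaternion ℝ

/-- The complex plane `ℂ_I = ℝ + Iℝ` through `1` and `I`. -/
def slicePlane (I : ℍ) : Set ℍ := {p | ∃ x y : ℝ, p = (x : ℍ) + (y : ℍ) * I}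

/-- `f : Ω → X` is (left) slice hyperholomorphic. -/
def SliceHyperholomorphicOn {X : Type*} [NormedAddCommGroup X] [NormedSpace ℝ X]
    [Module ℍ X] (f : ℍ → X) (Ω : Set ℍ) : Prop :=
  DifferentiableOn ℝ f Ω ∧
    ∀ I : ℍ, I ^ 2 = -1 → ∀ p ∈ Ω ∩ slicePlane I,
      fderiv ℝ f p 1 + I • fderiv ℝ f p I = 0

namespace RepAux

open Complex

lemma re_eq_zero {I : ℍ} (hI : I ^ 2 = -1) : I.re = 0 := by
  have h1 := congrArg QuaternionAlgebra.re hI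
  have h2 := congrArg QuaternionAlgebra.imI hI
  have h3 := congrArg QuaternionAlgebra.imJ hI
  have h4 := congrArg QuaternionAlgebra.imK hI
  simp [pow_two, Quaternion.re_mul, Quaternion.imI_mul, Quaternion.imJ_mul,
    Quaternion.imK_mul, Quaternion.re_one, Quaternion.imI_one, Quaternion.imJ_one,
    Quaternion.imK_one] at h1 h2 h3 h4
  nlinarith [sq_nonneg I.re, sq_nonneg I.imI, sq_nonneg I.imJ, sq_nonneg I.imK]

lemma star_eq_neg {I : ℍ} (hI : I ^ 2 = -1) : star I = -I := by
  ext <;> simp [re_eq_zero hI]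

lemma mul_self_eq {I : ℍ} (hI : I ^ 2 = -1) : I * I = -1 := by rw [← pow_two]; exact hI

lemma liftAux_eq {I : ℍ} (hI' : I * I = -1) (z : ℂ) :
    Complex.liftAux I hI' z = (z.re : ℍ) + (z.im : ℍ) * I := by
  rw [Complex.liftAux_apply, ← Quaternion.coe_mul_eq_smul]
  rfl

lemma star_liftAux {I : ℍ} (hI : I ^ 2 = -1) (z : ℂ) :
    star (Complex.liftAux I (mul_self_eq hI) z)
      = Complex.liftAux I (mul_self_eq hI) ((starRingEnd ℂ) z) := by
  rw [liftAux_eq, liftAux_eq]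
  simp only [star_add, star_mul, star_eq_neg hI, Quaternion.star_coe, conj_re, conj_im,
    Complex.ofReal_neg, neg_mul, mul_neg, neg_neg]
  rw [Quaternion.coe_neg, neg_mul, ← Quaternion.coe_commutes]

lemma norm_liftAux {I : ℍ} (hI : I ^ 2 = -1) (z : ℂ) :
    ‖Complex.liftAux I (mul_self_eq hI) z‖ = ‖z‖ := by
  have h : ‖Complex.liftAux I (mul_self_eq hI) z‖ * ‖Complex.liftAux I (mul_self_eq hI) z‖
      = ‖z‖ * ‖z‖ := by
    rw [← Quaternion.normSq_eq_norm_mul_self, Quaternion.normSq_def,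
      star_liftAux hI, ← map_mul, Complex.mul_conj]
    have : Complex.liftAux I (mul_self_eq hI) ((Complex.normSq z : ℝ) : ℂ)
        = ((Complex.normSq z : ℝ) : ℍ) := (Complex.liftAux I (mul_self_eq hI)).commutes _
    rw [this, Quaternion.re_coe, Complex.normSq_eq_norm_sq, sq]
  exact (mul_self_inj (norm_nonneg _) (norm_nonneg _)).mp h

lemma half_comm (a J : ℍ) : a / 2 * J = a * J / 2 := by
  have h2 : (2 : ℍ) = ((2 : ℝ) : ℍ) := by exact_mod_cast rfl
  rw [div_eq_mul_inv, div_eq_mul_inv, h2, ← Quaternion.coe_inv, mul_assoc,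
    Quaternion.coe_commutes, ← mul_assoc]

lemma e1 {I J : ℍ} (hI : I * I = -1) (hJ : J * J = -1) :
    I * ((1 - I * J) / 2) = ((1 - I * J) / 2) * J := by
  have l1 : I * (1 - I * J) = I + J := by
    rw [mul_sub, mul_one, ← mul_assoc, hI, neg_one_mul, sub_neg_eq_add]
  have l2 : (1 - I * J) * J = J + I := by
    rw [sub_mul, one_mul, mul_assoc, hJ, mul_neg_one, sub_neg_eq_add]
  rw [half_comm, l2, ← mul_div_assoc, l1, add_comm]

lemma e2 {I J : ℍ} (hI : I * I = -1) (hJ : J * J = -1) :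
    I * ((1 + I * J) / 2) = -(((1 + I * J) / 2) * J) := by
  have l1 : I * (1 + I * J) = I - J := by
    rw [mul_add, mul_one, ← mul_assoc, hI, neg_one_mul, ← sub_eq_add_neg]
  have l2 : (1 + I * J) * J = J - I := by
    rw [add_mul, one_mul, mul_assoc, hJ, mul_neg_one, ← sub_eq_add_neg]
  rw [half_comm, l2, ← mul_div_assoc, l1, ← neg_div, neg_sub]

lemma e3 (I J : ℍ) : (1 - I * J) / 2 + (1 + I * J) / 2 = 1 := by
  rw [← add_div, sub_add_add_cancel]
  have h1 : (1 : ℍ) + 1 = 2 := one_add_one_eq_two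
  rw [h1]
  have h20 : (2 : ℍ) ≠ 0 := by
    rw [(by exact_mod_cast rfl : (2:ℍ) = ((2:ℝ):ℍ)), ← Quaternion.coe_zero]
    exact Quaternion.coe_injective.ne (by norm_num)
  exact div_self h20

end RepAux

set_option maxHeartbeats 1000000 in
/-- Representation formula for slice hyperholomorphic functions with values in a
two-sided quaternionic Banach space, on an axially symmetric slice domain:
`f(x + Iy) = ½(1 − IJ) f(x + Jy) + ½(1 + IJ) f(x − Jy)` for all `I, J ∈ 𝕊`. -/
theorem representation_formula
    (X : Type*) [NormedAddCommGroup X] [NormedSpace ℝ X] [CompleteSpace X]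
    [Module ℍ X] [Module ℍᵐᵒᵖ X] [IsScalarTower ℝ ℍ X] [IsScalarTower ℝ ℍᵐᵒᵖ X]
    [SMulCommClass ℍ ℍᵐᵒᵖ X] [IsBoundedSMul ℍ X] [IsBoundedSMul ℍᵐᵒᵖ X]
    (Ω : Set ℍ) (hΩopen : IsOpen Ω) (hΩconn : IsConnected Ω)
    (hΩreal : ∃ x : ℝ, (x : ℍ) ∈ Ω)
    (hΩslice : ∀ I : ℍ, I ^ 2 = -1 → IsConnected (Ω ∩ slicePlane I))
    (hΩax : ∀ (x y : ℝ) (I J : ℍ), I ^ 2 = -1 → J ^ 2 = -1 →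
      (x : ℍ) + (y : ℍ) * I ∈ Ω → (x : ℍ) + (y : ℍ) * J ∈ Ω)
    (f : ℍ → X) (hf : SliceHyperholomorphicOn f Ω) :
    ∀ (x y : ℝ) (I J : ℍ), I ^ 2 = -1 → J ^ 2 = -1 →
      (x : ℍ) + (y : ℍ) * I ∈ Ω →
      f ((x : ℍ) + (y : ℍ) * I) =
        ((1 - I * J) / 2 : ℍ) • f ((x : ℍ) + (y : ℍ) * J) +
        ((1 + I * J) / 2 : ℍ) • f ((x : ℍ) - (y : ℍ) * J) := by
  obtain ⟨hfd, hfCR⟩ := hf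
  intro x y I J hI hJ hmem
  -- basic instances
  haveI hSMulComm : SMulCommClass ℝ ℍ X :=
    ⟨fun r q v => by
      rw [← algebraMap_smul ℍ r v, ← algebraMap_smul ℍ r (q • v), smul_smul, smul_smul,
        Algebra.commutes]⟩
  have hI' : I * I = -1 := RepAux.mul_self_eq hI
  have hJ' : J * J = -1 := RepAux.mul_self_eq hJ
  set σ : ℂ →ₐ[ℝ] ℍ := Complex.liftAux I hI' with hσdef
  set τ : ℂ →ₐ[ℝ] ℍ := Complex.liftAux J hJ' with hτdef
  -- the complex module structure on X induced by I
  letI : Module ℂ X := Module.compHom X (σ.toRingHom : ℂ →+* ℍ)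
  have csmul_def : ∀ (c : ℂ) (v : X), c • v = σ c • v := fun c v => rfl
  letI : NormedSpace ℂ X :=
    { norm_smul_le := fun c v => by
        rw [csmul_def]
        calc ‖σ c • v‖ ≤ ‖σ c‖ * ‖v‖ := norm_smul_le _ _
        _ = ‖c‖ * ‖v‖ := by rw [show σ c = Complex.liftAux I (RepAux.mul_self_eq hI) c from rfl,
              RepAux.norm_liftAux hI] }
  letI : IsScalarTower ℝ ℂ X :=
    ⟨fun r c v => by
      rw [csmul_def, csmul_def, map_smul, smul_assoc]⟩
  -- continuous linear versions
  let σL : ℂ →L[ℝ] ℍ := LinearMap.toContinuousLinearMap σ.toLinearMap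
  let τL : ℂ →L[ℝ] ℍ := LinearMap.toContinuousLinearMap τ.toLinearMap
  let κL : ℂ →L[ℝ] ℂ := Complex.conjCLE.toContinuousLinearMap
  have hσL : ∀ z : ℂ, σL z = σ z := fun z => rfl
  have hτL : ∀ z : ℂ, τL z = τ z := fun z => rfl
  have hκL : ∀ z : ℂ, κL z = (starRingEnd ℂ) z := fun z => rfl
  -- slice membership facts
  have hσslice : ∀ z : ℂ, σ z ∈ slicePlane I := fun z => ⟨z.re, z.im, RepAux.liftAux_eq hI' z⟩
  have hτslice : ∀ z : ℂ, τ z ∈ slicePlane J := fun z => ⟨z.re, z.im, RepAux.liftAux_eq hJ' z⟩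
  -- membership transfers
  have hmemτ : ∀ z : ℂ, σ z ∈ Ω → τ z ∈ Ω := by
    intro z hz
    rw [RepAux.liftAux_eq hJ' z]
    exact hΩax z.re z.im I J hI hJ (by rw [← RepAux.liftAux_eq hI' z]; exact hz)
  have hmemτc : ∀ z : ℂ, σ z ∈ Ω → τ ((starRingEnd ℂ) z) ∈ Ω := by
    intro z hz
    have hnegJ : (-J) ^ 2 = -1 := by rw [neg_pow_two]; exact hJ
    have h := hΩax z.re z.im I (-J) hI hnegJ (by rw [← RepAux.liftAux_eq hI' z]; exact hz)
    rw [RepAux.liftAux_eq hJ']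
    have : ((starRingEnd ℂ) z).re = z.re := Complex.conj_re z
    rw [this, (Complex.conj_im z : ((starRingEnd ℂ) z).im = -z.im)]
    rw [Quaternion.coe_neg, neg_mul]
    rw [mul_neg] at h
    exact h
  -- Cauchy-Riemann consequence
  have cr : ∀ (K : ℍ), K ^ 2 = -1 → K * K = -1 → ∀ p : ℍ, p ∈ Ω → p ∈ slicePlane K →
      fderiv ℝ f p K = K • fderiv ℝ f p 1 := by
    intro K hK hK' p hp hsp
    have h := hfCR K hK p ⟨hp, hsp⟩
    have h2 := congrArg (fun v : X => K • v) h
    simp only [smul_add, smul_smul, hK', neg_one_smul, smul_zero] at h2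
    have := add_eq_zero_iff_eq_neg.mp h2
    rw [this, neg_neg]
  set c₁ : ℍ := (1 - I * J) / 2 with hc₁
  set c₂ : ℍ := (1 + I * J) / 2 with hc₂
  set F : ℂ → X := fun z => f (σ z) with hF
  set G : ℂ → X := fun z => c₁ • f (τ z) + c₂ • f (τ ((starRingEnd ℂ) z)) with hG
  set U : Set ℂ := ⇑σ ⁻¹' Ω with hU
  have hσcont : Continuous ⇑σ := σ.toLinearMap.continuous_of_finiteDimensional
  have hUopen : IsOpen U := hΩopen.preimage hσcont
  -- expansion of the quaternionic scalar action
  have hexp : ∀ (w : ℂ) (v : X), σ w • v = w.re • v + w.im • (I • v) := by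
    intro w v
    have : σ w = w.re • (1 : ℍ) + w.im • I := by
      rw [show σ w = Complex.liftAux I hI' w from rfl, Complex.liftAux_apply,
        Algebra.algebraMap_eq_smul_one]
    rw [this, add_smul, smul_assoc, smul_assoc, one_smul]
  -- F is holomorphic on U
  have hFdiff : ∀ z ∈ U, DifferentiableAt ℂ F z := by
    intro z hz
    have hfd' : DifferentiableAt ℝ f (σ z) := hfd.differentiableAt (hΩopen.mem_nhds hz)
    set D := fderiv ℝ f (σ z) with hD
    have hDat : HasFDerivAt f D (σ z) := hfd'.hasFDerivAt
    have hFat : HasFDerivAt F (D.comp σL) z := HasFDerivAt.comp z hDat σL.hasFDerivAt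
    have hDI : D I = I • D 1 := cr I hI hI' (σ z) hz (hσslice z)
    let L : ℂ →L[ℂ] X := ContinuousLinearMap.smulRight (1 : ℂ →L[ℂ] ℂ) (D 1)
    have hLr : L.restrictScalars ℝ = D.comp σL := by
      apply ContinuousLinearMap.ext
      intro w
      show w • D 1 = D (σL w)
      rw [csmul_def, hσL, hexp w (D 1), ← hDI]
      have : σ w = w.re • (1 : ℍ) + w.im • I := by
        rw [show σ w = Complex.liftAux I hI' w from rfl, Complex.liftAux_apply,
          Algebra.algebraMap_eq_smul_one]
      rw [this, map_add, map_smul, map_smul]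
    exact (hasFDerivAt_of_restrictScalars ℝ hFat hLr).differentiableAt
  -- G is holomorphic on U
  have hGdiff : ∀ z ∈ U, DifferentiableAt ℂ G z := by
    intro z hz
    have hp₁ : τ z ∈ Ω := hmemτ z hz
    have hp₂ : τ ((starRingEnd ℂ) z) ∈ Ω := hmemτc z hz
    set D₁ := fderiv ℝ f (τ z) with hD₁
    set D₂ := fderiv ℝ f (τ ((starRingEnd ℂ) z)) with hD₂
    have hD₁at : HasFDerivAt f D₁ (τ z) :=
      (hfd.differentiableAt (hΩopen.mem_nhds hp₁)).hasFDerivAt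
    have hD₂at : HasFDerivAt f D₂ (τ ((starRingEnd ℂ) z)) :=
      (hfd.differentiableAt (hΩopen.mem_nhds hp₂)).hasFDerivAt
    have h₁ : HasFDerivAt (fun w => f (τ w)) (D₁.comp τL) z :=
      HasFDerivAt.comp z hD₁at τL.hasFDerivAt
    have h₂ : HasFDerivAt (fun w => f (τ ((starRingEnd ℂ) w))) (D₂.comp (τL.comp κL)) z := by
      have := HasFDerivAt.comp z (HasFDerivAt.comp (κL z) hD₂at τL.hasFDerivAt) κL.hasFDerivAt
      exact this
    have hGat : HasFDerivAt G (c₁ • (D₁.comp τL) + c₂ • (D₂.comp (τL.comp κL))) z :=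
      (h₁.const_smul c₁).add (h₂.const_smul c₂)
    have hD₁J : D₁ J = J • D₁ 1 := cr J hJ hJ' (τ z) hp₁ (hτslice z)
    have hD₂J : D₂ J = J • D₂ 1 :=
      cr J hJ hJ' (τ ((starRingEnd ℂ) z)) hp₂ (hτslice _)
    let L : ℂ →L[ℂ] X :=
      ContinuousLinearMap.smulRight (1 : ℂ →L[ℂ] ℂ) (c₁ • D₁ 1 + c₂ • D₂ 1)
    have hLr : L.restrictScalars ℝ = c₁ • (D₁.comp τL) + c₂ • (D₂.comp (τL.comp κL)) := by
      apply ContinuousLinearMap.ext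
      intro w
      show w • (c₁ • D₁ 1 + c₂ • D₂ 1) = c₁ • D₁ (τL w) + c₂ • D₂ (τL (κL w))
      rw [csmul_def, hexp, hκL w, hτL w, hτL ((starRingEnd ℂ) w)]
      have ht1 : τ w = w.re • (1 : ℍ) + w.im • J := by
        rw [show τ w = Complex.liftAux J hJ' w from rfl, Complex.liftAux_apply,
          Algebra.algebraMap_eq_smul_one]
      have ht2 : τ ((starRingEnd ℂ) w) = w.re • (1 : ℍ) - w.im • J := by
        rw [show τ ((starRingEnd ℂ) w) = Complex.liftAux J hJ' ((starRingEnd ℂ) w) from rfl,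
          Complex.liftAux_apply, Algebra.algebraMap_eq_smul_one, Complex.conj_re,
          Complex.conj_im, neg_smul, ← sub_eq_add_neg]
      rw [ht1, ht2, map_add, map_sub, map_smul, map_smul, map_smul, map_smul]
      have hIc₁ : ∀ v : X, I • (c₁ • v) = c₁ • (J • v) := by
        intro v
        rw [smul_smul, smul_smul, RepAux.e1 hI' hJ', mul_smul]
      have hIc₂ : ∀ v : X, I • (c₂ • v) = -(c₂ • (J • v)) := by
        intro v
        rw [smul_smul, RepAux.e2 hI' hJ', neg_smul, mul_smul]
      rw [smul_add I (c₁ • D₁ 1) (c₂ • D₂ 1), hIc₁, hIc₂, ← hD₁J, ← hD₂J,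
        smul_add c₁ (w.re • D₁ 1), smul_sub c₂ (w.re • D₂ 1),
        smul_comm c₁ w.re, smul_comm c₂ w.re, smul_comm c₁ w.im, smul_comm c₂ w.im,
        smul_add w.im, smul_neg w.im, smul_add w.re (c₁ • D₁ 1)]
      abel
    exact (hasFDerivAt_of_restrictScalars ℝ hGat hLr).differentiableAt
  have hFan : AnalyticOnNhd ℂ F U :=
    DifferentiableOn.analyticOnNhd (fun z hz => (hFdiff z hz).differentiableWithinAt) hUopen
  have hGan : AnalyticOnNhd ℂ G U :=
    DifferentiableOn.analyticOnNhd (fun z hz => (hGdiff z hz).differentiableWithinAt) hUopen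
  -- F = G on the reals
  have hreal : ∀ r : ℝ, F ((r : ℝ) : ℂ) = G ((r : ℝ) : ℂ) := by
    intro r
    have hσr : σ ((r : ℝ) : ℂ) = (r : ℍ) := by
      rw [RepAux.liftAux_eq hI']
      simp
    have hτr : τ ((r : ℝ) : ℂ) = (r : ℍ) := by
      rw [RepAux.liftAux_eq hJ']
      simp
    have hτrc : τ ((starRingEnd ℂ) ((r : ℝ) : ℂ)) = (r : ℍ) := by
      rw [Complex.conj_ofReal]
      exact hτr
    show f (σ ((r : ℝ) : ℂ)) = c₁ • f (τ ((r : ℝ) : ℂ)) + c₂ • f (τ ((starRingEnd ℂ) ((r : ℝ) : ℂ)))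
    rw [hσr, hτr, hτrc, ← add_smul, hc₁, hc₂, RepAux.e3 I J, one_smul]
  -- the connectedness of U
  let τ' : ℍ → ℂ := fun q => ⟨q.re, -(q * I).re⟩
  have hre : ∀ w : ℂ, (σ w).re = w.re := by
    intro w
    rw [RepAux.liftAux_eq hI']
    simp [RepAux.re_eq_zero hI]
  have hτ'σ : ∀ z : ℂ, τ' (σ z) = z := by
    intro z
    have hmulI : σ z * I = σ (z * Complex.I) := by
      rw [map_mul]
      congr 1
      exact (Complex.liftAux_apply_I I hI').symm
    apply Complex.ext
    · exact hre z
    · show -(σ z * I).re = z.im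
      rw [hmulI, hre, Complex.mul_I_re, neg_neg]
  have hτ'cont : Continuous τ' := by
    have h1 : Continuous fun q : ℍ => q.re := Quaternion.continuous_re
    have h2 : Continuous fun q : ℍ => -(q * I).re :=
      (h1.comp (continuous_id.mul continuous_const)).neg
    have : τ' = fun q : ℍ => ((q.re : ℝ) : ℂ) + ((-(q * I).re : ℝ) : ℂ) * Complex.I :=
      funext fun q => Complex.mk_eq_add_mul_I _ _
    rw [this]
    exact ((Complex.continuous_ofReal.comp h1).add
      ((Complex.continuous_ofReal.comp h2).mul continuous_const))
  have hUconn : IsPreconnected U := by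
    have himg : U = τ' '' (Ω ∩ slicePlane I) := by
      ext z
      constructor
      · intro hz
        exact ⟨σ z, ⟨hz, hσslice z⟩, hτ'σ z⟩
      · rintro ⟨p, ⟨hp, x', y', rfl⟩, rfl⟩
        show σ (τ' _) ∈ Ω
        have : (x' : ℍ) + (y' : ℍ) * I = σ (⟨x', y'⟩ : ℂ) := by
          rw [hσdef]; exact (RepAux.liftAux_eq hI' (⟨x', y'⟩ : ℂ)).symm
        rw [this, hτ'σ, ← this]
        exact hp
    rw [himg]
    exact (((hΩslice I hI).image τ' hτ'cont.continuousOn)).isPreconnected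
  -- a real point of U
  obtain ⟨x₀, hx₀⟩ := hΩreal
  have hz₀U : ((x₀ : ℝ) : ℂ) ∈ U := by
    show σ ((x₀ : ℝ) : ℂ) ∈ Ω
    have : σ ((x₀ : ℝ) : ℂ) = (x₀ : ℍ) := by
      rw [RepAux.liftAux_eq hI']
      simp
    rw [this]
    exact hx₀
  -- frequently equal near the real point
  have hfreq : ∃ᶠ z in nhdsWithin ((x₀ : ℝ) : ℂ) {((x₀ : ℝ) : ℂ)}ᶜ, F z = G z := by
    have htend : Filter.Tendsto (fun n : ℕ => ((x₀ + ((n : ℝ) + 1)⁻¹ : ℝ) : ℂ)) Filter.atTop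
        (nhdsWithin ((x₀ : ℝ) : ℂ) {((x₀ : ℝ) : ℂ)}ᶜ) := by
      apply tendsto_nhdsWithin_of_tendsto_nhds_of_eventually_within
      · have h0 : Filter.Tendsto (fun n : ℕ => ((n : ℝ) + 1)⁻¹) Filter.atTop (nhds 0) :=
          tendsto_one_div_add_atTop_nhds_zero_nat.congr (by intro n; rw [one_div])
        have : Filter.Tendsto (fun n : ℕ => (x₀ + ((n : ℝ) + 1)⁻¹ : ℝ)) Filter.atTop
            (nhds x₀) := by
          simpa using (tendsto_const_nhds.add h0)
        exact (Complex.continuous_ofReal.tendsto x₀).comp this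
      · filter_upwards with n
        simp only [Set.mem_compl_iff, Set.mem_singleton_iff]
        intro h
        have : (x₀ + ((n : ℝ) + 1)⁻¹ : ℝ) = x₀ := by exact_mod_cast h
        have hne : ((n : ℝ) + 1)⁻¹ ≠ 0 := by positivity
        apply hne
        linarith
    exact htend.frequently (Filter.Frequently.of_forall fun n => hreal _)
  have heqOn : Set.EqOn F G U :=
    hFan.eqOn_of_preconnected_of_frequently_eq hGan hUconn hz₀U hfreq
  -- evaluate at the point of interest
  have hzU : (⟨x, y⟩ : ℂ) ∈ U := by
    show σ (⟨x, y⟩ : ℂ) ∈ Ω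
    rw [RepAux.liftAux_eq hI']
    exact hmem
  have := heqOn hzU
  have hFz : F (⟨x, y⟩ : ℂ) = f ((x : ℍ) + (y : ℍ) * I) := by
    show f (σ _) = _
    rw [RepAux.liftAux_eq hI']
  have hGz : G (⟨x, y⟩ : ℂ) =
      c₁ • f ((x : ℍ) + (y : ℍ) * J) + c₂ • f ((x : ℍ) - (y : ℍ) * J) := by
    show c₁ • f (τ _) + c₂ • f (τ _) = _
    have h1 : τ (⟨x, y⟩ : ℂ) = (x : ℍ) + (y : ℍ) * J := RepAux.liftAux_eq hJ' _
    have h2 : τ ((starRingEnd ℂ) (⟨x, y⟩ : ℂ)) = (x : ℍ) - (y : ℍ) * J := by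
      rw [RepAux.liftAux_eq hJ']
      have hre2 : ((starRingEnd ℂ) (⟨x, y⟩ : ℂ)).re = x := rfl
      have him2 : ((starRingEnd ℂ) (⟨x, y⟩ : ℂ)).im = -y := rfl
      rw [hre2, him2, Quaternion.coe_neg, neg_mul, ← sub_eq_add_neg]
    rw [h1, h2]
  rw [hFz, hGz] at this
  exact this
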